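/- arXiv:2202.03196 — 7 statements merged into one kernel-verified Lean document; each statement's English description precedes it below -/
import Mathlib

section
/- Let ÷ be an AGM contraction operator on epistemic states (satisfying (C1)–(C7)) with Ψ ↦ ≤_Ψ a contraction-compatible faithful assignment. If α ∧ β is believed strictly less plausibly false than its negation in the sense that β <_Ψ ¬β and ¬α ∧ β <_Ψ ¬α ∧ ¬β (the lifted order on formulas), then the contractional (β ⇓ α) is accepted by Ψ, i.e. Ψ ÷ α ⊨ β. -/
inductive Form (V : Type) : Type
  | var : V → Form V
  | falsum : Form V
  | imp : Form V → Form V → Form V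

namespace Form

def eval {V : Type} (w : V → Bool) : Form V → Bool
  | var v => w v
  | falsum => false
  | imp a b => !(eval w a) || eval w b

def neg {V : Type} (a : Form V) : Form V := imp a falsum

def top {V : Type} : Form V := neg falsum

def conj {V : Type} (a b : Form V) : Form V := neg (imp a (neg b))

end Form

/-- Worlds (propositional interpretations) over the signature `V`. -/
abbrev World (V : Type) := V → Bool

/-- Models of a single formula. -/
def FMod {V : Type} (a : Form V) : Set (World V) := {w | a.eval w = true}

/-- Models of a set of formulas. -/
def SMod {V : Type} (X : Set (Form V)) : Set (World V) := {w | ∀ a ∈ X, a.eval w = true}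

/-- Deductive closure (consequence operator). -/
def Cn {V : Type} (X : Set (Form V)) : Set (Form V) := {b | ∀ w ∈ SMod X, b.eval w = true}

/-- Minimal elements of a set of worlds w.r.t. a relation. -/
def minSet {V : Type} (S : Set (World V)) (r : World V → World V → Prop) : Set (World V) :=
  {w ∈ S | ∀ w' ∈ S, r w w'}

/-- Total preorder: total (hence reflexive) and transitive. -/
def TotalPre {V : Type} (r : World V → World V → Prop) : Prop :=
  (∀ x y, r x y ∨ r y x) ∧ (∀ x y z, r x y → r y z → r x z)

/-- A belief change operator over epistemic states `E`: each state has a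
deductively closed belief set, and the operator maps a state and a formula to a state. -/
structure BCO (V E : Type) where
  Bel : E → Set (Form V)
  closed : ∀ Ψ, Cn (Bel Ψ) = Bel Ψ
  op : E → Form V → E

/-- Models of (the belief set of) an epistemic state. -/
def stMod {V E : Type} (O : BCO V E) (Ψ : E) : Set (World V) := SMod (O.Bel Ψ)

/-- Faithful assignment: each `le Ψ` is a total preorder; models of `Ψ` are mutually
equivalent and strictly below non-models. -/
def Faithful {V E : Type} (O : BCO V E) (le : E → World V → World V → Prop) : Prop :=
  (∀ Ψ, TotalPre (le Ψ)) ∧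
  (∀ Ψ w₁ w₂, w₁ ∈ stMod O Ψ → w₂ ∈ stMod O Ψ → le Ψ w₁ w₂) ∧
  (∀ Ψ w₁ w₂, w₁ ∈ stMod O Ψ → w₂ ∉ stMod O Ψ → (le Ψ w₁ w₂ ∧ ¬ le Ψ w₂ w₁))

/-- Contraction-compatibility: `[[Ψ ÷ α]] = [[Ψ]] ∪ min([[¬α]], ≤_Ψ)`. -/
def ContrCompat {V E : Type} (O : BCO V E) (le : E → World V → World V → Prop) : Prop :=
  ∀ Ψ (α : Form V), stMod O (O.op Ψ α) = stMod O Ψ ∪ minSet (FMod α.neg) (le Ψ)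

/-- Revision-compatibility: `[[Ψ * α]] = min([[α]], ≤_Ψ)`. -/
def RevCompat {V E : Type} (O : BCO V E) (le : E → World V → World V → Prop) : Prop :=
  ∀ Ψ (α : Form V), stMod O (O.op Ψ α) = minSet (FMod α) (le Ψ)

/-- The AGM contraction postulates (C1)–(C7) for epistemic states. -/
def AGMContr {V E : Type} (O : BCO V E) : Prop :=
  (∀ Ψ α, O.Bel (O.op Ψ α) ⊆ O.Bel Ψ) ∧
  (∀ Ψ α, α ∉ O.Bel Ψ → O.Bel Ψ ⊆ O.Bel (O.op Ψ α)) ∧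
  (∀ Ψ (α : Form V), ¬ (∀ w, w ∈ FMod α) → α ∉ O.Bel (O.op Ψ α)) ∧
  (∀ Ψ α, O.Bel Ψ ⊆ Cn (O.Bel (O.op Ψ α) ∪ {α})) ∧
  (∀ Ψ α β, FMod α = FMod β → O.Bel (O.op Ψ α) = O.Bel (O.op Ψ β)) ∧
  (∀ Ψ (α β : Form V), O.Bel (O.op Ψ α) ∩ O.Bel (O.op Ψ β) ⊆ O.Bel (O.op Ψ (α.conj β))) ∧
  (∀ Ψ (α β : Form V), β ∉ O.Bel (O.op Ψ (α.conj β)) → O.Bel (O.op Ψ (α.conj β)) ⊆ O.Bel (O.op Ψ β))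

/-- Unbiasedness: every consistent set of formulas has an epistemic state whose
belief set is its deductive closure. -/
def Unbiased {V E : Type} (O : BCO V E) : Prop :=
  ∀ L : Set (Form V), (SMod L).Nonempty → ∃ Ψ : E, O.Bel Ψ = Cn L

/-- Strict lifted order on formulas induced by a preorder on worlds:
`φ < ψ` iff every minimal model of `ψ` is strictly above some minimal model of `φ`. -/
def fLt {V : Type} (r : World V → World V → Prop) (φ ψ : Form V) : Prop :=
  ∀ ω ∈ minSet (FMod ψ) r, ∃ ω' ∈ minSet (FMod φ) r, r ω' ω ∧ ¬ r ω ω'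

lemma eval_neg' {V : Type} (a : Form V) (w : World V) :
    a.neg.eval w = !a.eval w := by
  simp [Form.neg, Form.eval]

lemma eval_conj' {V : Type} (a b : Form V) (w : World V) :
    (a.conj b).eval w = (a.eval w && b.eval w) := by
  simp [Form.conj, Form.neg, Form.eval]

/-- if `β <_Ψ ¬β` and `¬α ∧ β <_Ψ ¬α ∧ ¬β` then `Ψ ÷ α ⊨ β`. -/
theorem stmt_5 {V E : Type} [Fintype V] (O : BCO V E)
    (le : E → World V → World V → Prop)
    (hA : AGMContr O) (hF : Faithful O le) (hC : ContrCompat O le) :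
    ∀ (Ψ : E) (α β : Form V),
      fLt (le Ψ) β β.neg → fLt (le Ψ) (α.neg.conj β) (α.neg.conj β.neg) →
        β ∈ O.Bel (O.op Ψ α) := by
  intro Ψ α β h1 h2
  rw [← O.closed (O.op Ψ α)]
  intro w hw
  have hw' : w ∈ stMod O Ψ ∪ minSet (FMod α.neg) (le Ψ) := by
    rw [← hC Ψ α]; exact hw
  by_contra hβ
  have hβ' : β.eval w = false := by
    cases h : β.eval w with
    | true => exact absurd h hβ
    | false => rfl
  cases hw' with
  | inl hmod =>
    -- w is a model of Ψ, hence ≤ everything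
    have hleall : ∀ w', le Ψ w w' := by
      intro w'
      by_cases h : w' ∈ stMod O Ψ
      · exact hF.2.1 Ψ w w' hmod h
      · exact (hF.2.2 Ψ w w' hmod h).1
    have hwmin : w ∈ minSet (FMod β.neg) (le Ψ) := by
      constructor
      · show β.neg.eval w = true
        rw [eval_neg', hβ']; rfl
      · intro w' _; exact hleall w'
    obtain ⟨ω', _, _, hnle⟩ := h1 w hwmin
    exact hnle (hleall ω')
  | inr hmin =>
    obtain ⟨hwα, hwle⟩ := hmin
    have hwα' : α.eval w = false := by
      have := hwα
      simp only [FMod, Set.mem_setOf_eq, eval_neg'] at this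
      cases h : α.eval w with
      | true => rw [h] at this; simp at this
      | false => rfl
    have hwmin : w ∈ minSet (FMod (α.neg.conj β.neg)) (le Ψ) := by
      constructor
      · show (α.neg.conj β.neg).eval w = true
        rw [eval_conj', eval_neg', eval_neg', hβ', hwα']; rfl
      · intro w' hw'
        apply hwle
        have : (α.neg.conj β.neg).eval w' = true := hw'
        rw [eval_conj'] at this
        exact (Bool.and_eq_true _ _).mp this |>.1
    obtain ⟨ω', hω'min, hle, hnle⟩ := h2 w hwmin
    apply hnle
    apply hwle
    have : (α.neg.conj β).eval ω' = true := hω'min.1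
    rw [eval_conj'] at this
    exact (Bool.and_eq_true _ _).mp this |>.1
end

section
/- There is no AGM contraction operator ÷ (satisfying postulates (C1)–(C7), equivalently representable by a contraction-compatible faithful assignment over an unbiased set of epistemic states with |Ω| ≥ 2) that satisfies the Darwiche–Pearl postulate (DP1): if β ⊨ α then Bel(Ψ ÷ α ÷ β) = Bel(Ψ ÷ β). -/
/-- Literal forcing `w v = w0 v`. -/
def litOf {V : Type} (w0 : World V) (v : V) : Form V :=
  if w0 v then Form.var v else (Form.var v).neg

lemma eval_litOf {V : Type} (w0 w : World V) (v : V) :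
    (litOf w0 v).eval w = true ↔ w v = w0 v := by
  by_cases h : w0 v <;> simp [litOf, h, Form.eval, Form.neg]

/-- A formula whose unique model is `w0`. -/
noncomputable def atomOf {V : Type} [Fintype V] (w0 : World V) : Form V :=
  (Finset.univ.toList.map (litOf w0)).foldr Form.conj Form.top

lemma eval_foldr_conj {V : Type} (w : World V) (l : List (Form V)) :
    (l.foldr Form.conj Form.top).eval w = l.all (fun a => a.eval w) := by
  induction l with
  | nil => rfl
  | cons a t ih => simp [Form.conj, Form.neg, Form.eval, ih]

lemma eval_atomOf {V : Type} [Fintype V] (w0 w : World V) :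
    (atomOf w0).eval w = true ↔ w = w0 := by
  rw [atomOf, eval_foldr_conj]
  simp only [List.all_eq_true, List.mem_map]
  constructor
  · intro h
    funext v
    exact (eval_litOf w0 w v).mp (h (litOf w0 v) ⟨v, by simp, rfl⟩)
  · rintro rfl a ⟨v, -, rfl⟩
    exact (eval_litOf _ _ v).mpr rfl

lemma stMod_anti {V E : Type} (O : BCO V E) {Ψ Φ : E}
    (h : O.Bel Ψ ⊆ O.Bel Φ) : stMod O Φ ⊆ stMod O Ψ := by
  intro w hw a ha
  exact hw a (h ha)

lemma falsum_not_mem {V E : Type} (O : BCO V E) {Ψ : E} {w : World V}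
    (hw : w ∈ stMod O Ψ) : Form.falsum ∉ O.Bel Ψ := by
  intro h
  simpa [Form.eval] using hw _ h

/-- no AGM contraction operator over an unbiased set of epistemic
states (with at least two worlds) satisfies (DP1). -/
theorem stmt_6 {V E : Type} [Fintype V] [DecidableEq V]
    (h2 : 2 ≤ Fintype.card (World V)) (O : BCO V E)
    (hA : AGMContr O) (hU : Unbiased O) :
    ¬ (∀ (Ψ : E) (α β : Form V), FMod β ⊆ FMod α →
        O.Bel (O.op (O.op Ψ α) β) = O.Bel (O.op Ψ β)) := by
  intro hDP
  obtain ⟨hC1, hC2, hC3, -⟩ := hA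
  obtain ⟨w1, w2, hne⟩ := Fintype.exists_pair_of_one_lt_card (by omega : 1 < Fintype.card (World V))
  set χ : Form V := atomOf w1 with hχdef
  -- a state whose belief set has exactly the model w1
  obtain ⟨Ψ, hΨ⟩ := hU {χ} ⟨w1, by
    intro a ha
    rw [Set.mem_singleton_iff] at ha
    subst ha
    exact (eval_atomOf w1 w1).mpr rfl⟩
  have hw1 : w1 ∈ stMod O Ψ := by
    intro a ha
    rw [hΨ] at ha
    exact ha w1 (by
      intro b hb
      rw [Set.mem_singleton_iff] at hb
      subst hb
      exact (eval_atomOf w1 w1).mpr rfl)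
  have hsub : stMod O Ψ ⊆ {w1} := by
    intro w hw
    have hχB : χ ∈ O.Bel Ψ := by
      rw [hΨ]
      intro u hu
      exact hu χ rfl
    exact (eval_atomOf w1 w).mp (hw χ hχB)
  -- χ is not a tautology
  have hnt : ¬ (∀ w, w ∈ FMod χ) := by
    intro h
    exact hne ((eval_atomOf w1 w2).mp (h w2)).symm
  -- C3: χ ∉ Bel (Ψ ÷ χ), hence a model of Ψ ÷ χ falsifying χ
  have hχnot : χ ∉ O.Bel (O.op Ψ χ) := hC3 Ψ χ hnt
  have hχnotCn : χ ∉ Cn (O.Bel (O.op Ψ χ)) := by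
    rw [O.closed]; exact hχnot
  obtain ⟨u, hu, huχ⟩ : ∃ u ∈ stMod O (O.op Ψ χ), ¬ χ.eval u = true := by
    by_contra h
    push_neg at h
    exact hχnotCn (fun w hw => h w hw)
  have hune : u ≠ w1 := fun h => huχ ((eval_atomOf w1 u).mpr h)
  -- u is a model of (Ψ ÷ χ) ÷ ⊥ by C1
  have hu2 : u ∈ stMod O (O.op (O.op Ψ χ) Form.falsum) :=
    stMod_anti O (hC1 (O.op Ψ χ) Form.falsum) hu
  -- DP1 with α = χ, β = ⊥
  have hDP1 := hDP Ψ χ Form.falsum (by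
    intro w hw
    simp [FMod, Form.eval] at hw)
  have hu3 : u ∈ stMod O (O.op Ψ Form.falsum) := by
    intro a ha
    exact hu2 a (hDP1 ▸ ha)
  -- but models of Ψ ÷ ⊥ are contained in those of Ψ (vacuity via C2)
  have hvac : O.Bel Ψ ⊆ O.Bel (O.op Ψ Form.falsum) :=
    hC2 Ψ Form.falsum (falsum_not_mem O hw1)
  have : u ∈ stMod O Ψ := stMod_anti O hvac hu3
  exact hune (hsub this)
end

section
/- There is no AGM contraction operator ÷ that satisfies the postulate (DP3): if Ψ ÷ β ⊨ α then Ψ ÷ α ÷ β ⊨ α, over a propositional language with at least one non-tautological consistent formula. -/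
/-- no AGM contraction operator over an unbiased set of epistemic
states satisfies (DP3), provided some formula is consistent and non-tautological. -/
theorem stmt_7 {V E : Type} [Fintype V] (O : BCO V E)
    (hex : ∃ α : Form V, (FMod α).Nonempty ∧ ¬ (∀ w, w ∈ FMod α))
    (hA : AGMContr O) (hU : Unbiased O) :
    ¬ (∀ (Ψ : E) (α β : Form V),
        α ∈ O.Bel (O.op Ψ β) → α ∈ O.Bel (O.op (O.op Ψ α) β)) := by
  intro hDP
  obtain ⟨α, ⟨w₀, hw₀⟩, hnt⟩ := hex
  obtain ⟨hC1, _, hC3, hC4, _⟩ := hA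
  -- a state believing exactly Cn {α}
  obtain ⟨Ψ, hΨ⟩ := hU {α} ⟨w₀, by intro a ha; cases ha; exact hw₀⟩
  -- top is believed after any contraction by top implies Bel Ψ ⊆ Bel (Ψ ÷ ⊤)
  have htopEval : ∀ (w : World V), (Form.top : Form V).eval w = true := by
    intro w; rfl
  have hBelTop : ∀ Ψ' : E, O.Bel Ψ' ⊆ O.Bel (O.op Ψ' Form.top) := by
    intro Ψ' b hb
    have h := hC4 Ψ' Form.top hb
    have : b ∈ Cn (O.Bel (O.op Ψ' Form.top)) := by
      intro w hw
      exact h w (by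
        intro a ha
        rcases ha with ha | ha
        · exact hw a ha
        · cases ha; exact htopEval w)
    rw [O.closed] at this
    exact this
  -- α ∈ Bel Ψ
  have hαΨ : α ∈ O.Bel Ψ := by
    rw [hΨ]; intro w hw; exact hw α rfl
  -- α ∈ Bel (Ψ ÷ ⊤)
  have h1 : α ∈ O.Bel (O.op Ψ Form.top) := hBelTop Ψ hαΨ
  -- DP3 with β = ⊤
  have h2 : α ∈ O.Bel (O.op (O.op Ψ α) Form.top) := hDP Ψ α Form.top h1
  -- inclusion: α ∈ Bel (Ψ ÷ α)
  have h3 : α ∈ O.Bel (O.op Ψ α) := hC1 (O.op Ψ α) Form.top h2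
  exact hC3 Ψ α hnt h3
end

section
/- Let ÷ be an AGM contraction operator with contraction-compatible faithful assignment Ψ ↦ ≤_Ψ. Then ÷ satisfies (IC1_⇒): if ¬α ⊨ β then Ψ ÷ α ÷ β ⊨ γ implies Ψ ÷ β ⊨ γ, if and only if for all worlds ω₁, ω₂ ⊨ α: ω₁ ≤_Ψ ω₂ implies ω₁ ≤_{Ψ÷α} ω₂. -/
namespace Stmt10Aux
open Form

variable {V : Type} [Fintype V]

lemma mem_Bel_iff {E : Type} (O : BCO V E) (Ψ : E) (γ : Form V) :
    γ ∈ O.Bel Ψ ↔ stMod O Ψ ⊆ FMod γ := by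
  constructor
  · intro h w hw
    exact hw γ h
  · intro h
    rw [← O.closed Ψ]
    intro w hw
    exact h hw

def lit (w : World V) (v : V) : Form V := if w v then var v else neg (var v)

def conjList (L : List (Form V)) : Form V := L.foldr conj top

noncomputable def chi (w : World V) : Form V := conjList ((Finset.univ : Finset V).toList.map (lit w))

def disjF (a b : Form V) : Form V := imp (neg a) b

def disjList (L : List (Form V)) : Form V := L.foldr disjF falsum

lemma eval_conj (a b : Form V) (w : World V) :
    (conj a b).eval w = (a.eval w && b.eval w) := by
  simp [conj, neg, eval]

lemma eval_conjList (L : List (Form V)) (w : World V) :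
    (conjList L).eval w = L.all (fun f => f.eval w) := by
  induction L with
  | nil => simp [conjList, top, neg, eval]
  | cons a L ih => simp [conjList, eval_conj, List.all_cons] at *; simp [ih]

lemma eval_lit (w w' : World V) (v : V) :
    (lit w v).eval w' = true ↔ w' v = w v := by
  by_cases h : w v <;> simp [lit, h, neg, eval] <;> cases h' : w' v <;> simp_all

lemma eval_chi (w w' : World V) : (chi w).eval w' = true ↔ w' = w := by
  simp only [chi, eval_conjList, List.all_eq_true, List.mem_map]
  constructor
  · intro h
    funext v
    exact (eval_lit w w' v).1 (h _ ⟨v, by simp, rfl⟩)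
  · intro h f hf
    subst h
    obtain ⟨v, -, rfl⟩ := hf
    exact (eval_lit w' w' v).2 rfl

lemma eval_disjF (a b : Form V) (w : World V) :
    (disjF a b).eval w = (a.eval w || b.eval w) := by
  simp [disjF, neg, eval]

lemma eval_disjList (L : List (Form V)) (w : World V) :
    (disjList L).eval w = L.any (fun f => f.eval w) := by
  induction L with
  | nil => simp [disjList, eval]
  | cons a L ih => simp [disjList, eval_disjF, List.any_cons] at *; simp [ih]

lemma exists_form (S : Set (World V)) : ∃ γ : Form V, FMod γ = S := by
  classical
  haveI : Fintype (World V) := Pi.instFintype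
  refine ⟨disjList (S.toFinset.toList.map chi), ?_⟩
  ext w
  simp only [FMod, Set.mem_setOf_eq, eval_disjList, List.any_eq_true, List.mem_map]
  constructor
  · rintro ⟨f, ⟨w', hw', rfl⟩, hf⟩
    rw [(eval_chi w' w).1 hf]
    exact Set.mem_toFinset.1 (Finset.mem_toList.1 hw')
  · intro hw
    exact ⟨chi w, ⟨w, Finset.mem_toList.2 (Set.mem_toFinset.2 hw), rfl⟩, (eval_chi w w).2 rfl⟩

lemma mem_neg (β : Form V) (w : World V) : w ∈ FMod β.neg ↔ w ∉ FMod β := by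
  simp [FMod, neg, eval]

lemma le_refl_of_total {E : Type} {O : BCO V E} {le : E → World V → World V → Prop}
    (hF : Faithful O le) (Ψ : E) (w : World V) : le Ψ w w := by
  rcases (hF.1 Ψ).1 w w with h | h <;> exact h

end Stmt10Aux

open Stmt10Aux in
/-- (IC1_⇒) holds iff for all models `ω₁, ω₂` of `α`,
`ω₁ ≤_Ψ ω₂` implies `ω₁ ≤_{Ψ÷α} ω₂`. -/
theorem stmt_10 {V E : Type} [Fintype V] (O : BCO V E)
    (le : E → World V → World V → Prop)
    (hA : AGMContr O) (hF : Faithful O le) (hC : ContrCompat O le) :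
    (∀ (Ψ : E) (α β γ : Form V), FMod α.neg ⊆ FMod β →
        γ ∈ O.Bel (O.op (O.op Ψ α) β) → γ ∈ O.Bel (O.op Ψ β)) ↔
    (∀ (Ψ : E) (α : Form V) (ω₁ ω₂ : World V),
        ω₁ ∈ FMod α → ω₂ ∈ FMod α → le Ψ ω₁ ω₂ → le (O.op Ψ α) ω₁ ω₂) := by
  clear hA
  constructor
  · -- IC1 implies order preservation
    intro hIC Ψ α ω₁ ω₂ h1 h2 h12
    by_cases hm : ω₁ ∈ stMod O (O.op Ψ α)
    · by_cases hm2 : ω₂ ∈ stMod O (O.op Ψ α)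
      · exact hF.2.1 _ _ _ hm hm2
      · exact (hF.2.2 _ _ _ hm hm2).1
    · obtain ⟨β, hβ⟩ := exists_form (({ω₁, ω₂} : Set (World V))ᶜ)
      have hnegβ : FMod β.neg = ({ω₁, ω₂} : Set (World V)) := by
        ext w; rw [mem_neg, hβ]; simp; tauto
      have hsub : FMod α.neg ⊆ FMod β := by
        intro w hw
        rw [mem_neg] at hw
        rw [hβ]
        rintro (rfl | rfl) <;> [exact hw h1; exact hw h2]
      -- semantic form of IC1
      obtain ⟨γ, hγ⟩ := exists_form (stMod O (O.op (O.op Ψ α) β))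
      have hsem : stMod O (O.op Ψ β) ⊆ stMod O (O.op (O.op Ψ α) β) := by
        rw [← hγ]
        exact (mem_Bel_iff O _ γ).1
          (hIC Ψ α β γ hsub ((mem_Bel_iff O _ γ).2 (le_of_eq hγ.symm)))
      have hω₁min : ω₁ ∈ minSet (FMod β.neg) (le Ψ) := by
        rw [hnegβ]
        refine ⟨by simp, ?_⟩
        rintro w' (h | h) <;> rw [show w' = _ from h]
        · exact le_refl_of_total hF Ψ ω₁
        · exact h12
      have hω₁ : ω₁ ∈ stMod O (O.op Ψ β) := by
        rw [hC Ψ β]; exact Or.inr hω₁min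
      have := hsem hω₁
      rw [hC (O.op Ψ α) β] at this
      rcases this with h | h
      · exact absurd h hm
      · exact h.2 ω₂ (by rw [hnegβ]; right; rfl)
  · -- order preservation implies IC1
    intro hOP Ψ α β γ hsub hγ
    rw [mem_Bel_iff] at hγ ⊢
    refine fun w hw => hγ ?_
    have hnb : FMod β.neg ⊆ FMod α := by
      intro w' hw'
      rw [mem_neg] at hw'
      by_contra h
      exact hw' (hsub ((mem_neg α w').2 h))
    rw [hC Ψ β] at hw
    rw [hC (O.op Ψ α) β]
    rcases hw with hw | hw
    · left
      rw [hC Ψ α]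
      exact Or.inl hw
    · right
      refine ⟨hw.1, fun w' hw' => ?_⟩
      exact hOP Ψ α w w' (hnb hw.1) (hnb hw') (hw.2 w' hw')
end

section
/- Let ÷ be an AGM contraction operator with contraction-compatible faithful assignment Ψ ↦ ≤_Ψ. Then ÷ satisfies (IC2): if α ⊨ β then Bel(Ψ ÷ α ÷ β) =_{¬β} Bel(Ψ ÷ β), if and only if the assignment satisfies (IC2^rel): for all ω₁, ω₂ ⊨ ¬α, ω₁ ≤_Ψ ω₂ iff ω₁ ≤_{Ψ÷α} ω₂. -/
namespace Stmt17Aux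

lemma eval_neg {V : Type} (a : Form V) (w : World V) : a.neg.eval w = !a.eval w := by
  simp [Form.neg, Form.eval]

lemma mem_FMod_neg {V : Type} (a : Form V) (w : World V) :
    w ∈ FMod a.neg ↔ a.eval w = false := by
  simp [FMod, eval_neg, Set.mem_setOf_eq]

lemma eval_conj {V : Type} (a b : Form V) (w : World V) :
    (Form.conj a b).eval w = (a.eval w && b.eval w) := by
  simp [Form.conj, Form.neg, Form.eval]

def lit {V : Type} (w : World V) (v : V) : Form V :=
  if w v then Form.var v else (Form.var v).neg

lemma eval_lit {V : Type} (w w' : World V) (v : V) :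
    (lit w v).eval w' = true ↔ w' v = w v := by
  unfold lit
  by_cases h : w v <;> simp [h, Form.eval, eval_neg]

def descList {V : Type} (w : World V) : List V → Form V
  | [] => Form.top
  | v :: vs => Form.conj (lit w v) (descList w vs)

lemma eval_descList {V : Type} (w w' : World V) (l : List V) :
    (descList w l).eval w' = true ↔ ∀ v ∈ l, w' v = w v := by
  induction l with
  | nil => simp [descList, Form.top, Form.neg, Form.eval]
  | cons v vs ih =>
    simp [descList, eval_conj, Bool.and_eq_true, ih, eval_lit]

noncomputable def desc {V : Type} [Fintype V] (w : World V) : Form V :=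
  descList w Finset.univ.toList

lemma eval_desc_false' {V : Type} [Fintype V] (w w' : World V) :
    (descList w Finset.univ.toList).eval w' = false ↔ w' ≠ w := by
  rw [Bool.eq_false_iff]
  constructor
  · intro h hne
    exact h ((eval_descList w w' _).2 (by intro v _; rw [hne]))
  · intro hne h
    exact hne (funext fun v => (eval_descList w w' _).1 h v (by simp))

lemma eval_desc {V : Type} [Fintype V] (w w' : World V) :
    (desc w).eval w' = true ↔ w' = w := by
  unfold desc
  rw [eval_descList]
  constructor
  · intro h; funext v; exact h v (by simp)
  · intro h v _; rw [h]

end Stmt17Aux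

/-- (IC2) holds iff the assignment satisfies (IC2ʳᵉˡ). -/
theorem stmt_17 {V E : Type} [Fintype V] (O : BCO V E)
    (le : E → World V → World V → Prop)
    (hA : AGMContr O) (hF : Faithful O le) (hC : ContrCompat O le) :
    (∀ (Ψ : E) (α β : Form V), FMod α ⊆ FMod β →
        SMod (O.Bel (O.op (O.op Ψ α) β)) ∩ FMod β.neg =
          SMod (O.Bel (O.op Ψ β)) ∩ FMod β.neg) ↔
    (∀ (Ψ : E) (α : Form V) (ω₁ ω₂ : World V),
        ω₁ ∈ FMod α.neg → ω₂ ∈ FMod α.neg → (le Ψ ω₁ ω₂ ↔ le (O.op Ψ α) ω₁ ω₂)) := by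
  classical
  open Stmt17Aux in
  obtain ⟨hTP, hEqF, hStr⟩ := hF
  have hrefl : ∀ (Φ : E) (w : World V), le Φ w w := fun Φ w => ((hTP Φ).1 w w).elim id id
  have hmin : ∀ (Φ : E) (w w' : World V), w ∈ stMod O Φ → le Φ w w' := by
    intro Φ w w' hw
    by_cases h' : w' ∈ stMod O Φ
    · exact hEqF Φ w w' hw h'
    · exact (hStr Φ w w' hw h').1
  constructor
  · intro h Ψ α ω₁ ω₂ h1 h2
    have hα1 : α.eval ω₁ = false := (Stmt17Aux.mem_FMod_neg α ω₁).1 h1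
    have hα2 : α.eval ω₂ = false := (Stmt17Aux.mem_FMod_neg α ω₂).1 h2
    set β : Form V := Form.neg (Form.imp (Stmt17Aux.desc ω₁).neg (Stmt17Aux.desc ω₂)) with hβdef
    have hβeval : ∀ w : World V, β.eval w = !((Stmt17Aux.desc ω₁).eval w || (Stmt17Aux.desc ω₂).eval w) := by
      intro w
      simp [hβdef, Form.eval, Stmt17Aux.eval_neg]
    have hβneg : ∀ w : World V, w ∈ FMod β.neg ↔ (w = ω₁ ∨ w = ω₂) := by
      intro w
      rw [Stmt17Aux.mem_FMod_neg, hβeval]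
      simp only [Bool.not_eq_false', Bool.or_eq_true, Stmt17Aux.eval_desc]
    have hsub : FMod α ⊆ FMod β := by
      intro w hw
      have hwα : α.eval w = true := hw
      have hw1 : w ≠ ω₁ := by rintro rfl; rw [hα1] at hwα; exact Bool.false_ne_true hwα
      have hw2 : w ≠ ω₂ := by rintro rfl; rw [hα2] at hwα; exact Bool.false_ne_true hwα
      show β.eval w = true
      rw [hβeval]
      simp only [Bool.not_eq_true', Bool.or_eq_false_iff]
      exact ⟨(Stmt17Aux.eval_desc_false' ω₁ w).2 hw1, (Stmt17Aux.eval_desc_false' ω₂ w).2 hw2⟩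
    have key := h Ψ α β hsub
    have hβ1 : ω₁ ∈ FMod β.neg := (hβneg ω₁).2 (Or.inl rfl)
    have hβ2 : ω₂ ∈ FMod β.neg := (hβneg ω₂).2 (Or.inr rfl)
    constructor
    · intro h12
      -- ω₁ is minimal in FMod β.neg wrt le Ψ
      have hm : ω₁ ∈ minSet (FMod β.neg) (le Ψ) := by
        refine ⟨hβ1, ?_⟩
        intro w' hw'
        rcases (hβneg w').1 hw' with rfl | rfl
        · exact hrefl Ψ w'
        · exact h12
      have hmem : ω₁ ∈ stMod O (O.op Ψ β) ∩ FMod β.neg := by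
        refine ⟨?_, hβ1⟩
        rw [hC Ψ β]
        exact Or.inr hm
      have hmem' : ω₁ ∈ stMod O (O.op (O.op Ψ α) β) ∩ FMod β.neg := by
        rw [show (stMod O (O.op (O.op Ψ α) β) ∩ FMod β.neg : Set (World V)) =
            SMod (O.Bel (O.op (O.op Ψ α) β)) ∩ FMod β.neg from rfl, key]
        exact hmem
      have := hmem'.1
      rw [hC (O.op Ψ α) β] at this
      rcases this with hin | hin
      · exact hmin (O.op Ψ α) ω₁ ω₂ hin
      · exact hin.2 ω₂ hβ2
    · intro h12
      have hm : ω₁ ∈ minSet (FMod β.neg) (le (O.op Ψ α)) := by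
        refine ⟨hβ1, ?_⟩
        intro w' hw'
        rcases (hβneg w').1 hw' with rfl | rfl
        · exact hrefl _ w'
        · exact h12
      have hmem : ω₁ ∈ stMod O (O.op (O.op Ψ α) β) ∩ FMod β.neg := by
        refine ⟨?_, hβ1⟩
        rw [hC (O.op Ψ α) β]
        exact Or.inr hm
      have hmem' : ω₁ ∈ stMod O (O.op Ψ β) ∩ FMod β.neg := by
        rw [show (stMod O (O.op Ψ β) ∩ FMod β.neg : Set (World V)) =
            SMod (O.Bel (O.op Ψ β)) ∩ FMod β.neg from rfl, ← key]
        exact hmem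
      have := hmem'.1
      rw [hC Ψ β] at this
      rcases this with hin | hin
      · exact hmin Ψ ω₁ ω₂ hin
      · exact hin.2 ω₂ hβ2
  · intro hrel Ψ α β hsub
    have hβα : FMod β.neg ⊆ FMod α.neg := by
      intro w hw
      rw [Stmt17Aux.mem_FMod_neg] at hw ⊢
      by_contra hne
      have : α.eval w = true := by
        cases hval : α.eval w
        · exact absurd hval hne
        · rfl
      have h2 : Form.eval w β = true := hsub this
      rw [hw] at h2
      exact Bool.false_ne_true h2
    have hminEq : minSet (FMod β.neg) (le Ψ) = minSet (FMod β.neg) (le (O.op Ψ α)) := by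
      ext w
      constructor
      · rintro ⟨hw, hmin'⟩
        exact ⟨hw, fun w' hw' => (hrel Ψ α w w' (hβα hw) (hβα hw')).1 (hmin' w' hw')⟩
      · rintro ⟨hw, hmin'⟩
        exact ⟨hw, fun w' hw' => (hrel Ψ α w w' (hβα hw) (hβα hw')).2 (hmin' w' hw')⟩
    ext w
    constructor
    · rintro ⟨hwL, hwβ⟩
      refine ⟨?_, hwβ⟩
      have hwL' : w ∈ stMod O Ψ ∪ minSet (FMod α.neg) (le Ψ) ∪ minSet (FMod β.neg) (le (O.op Ψ α)) := by
        have : w ∈ stMod O (O.op (O.op Ψ α) β) := hwL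
        rw [hC (O.op Ψ α) β, hC Ψ α] at this
        exact this
      show w ∈ stMod O (O.op Ψ β)
      rw [hC Ψ β]
      rcases hwL' with (hin | hin) | hin
      · exact Or.inl hin
      · -- w minimal in ¬α, w ∈ ¬β ⊆ ¬α, so minimal in ¬β
        exact Or.inr ⟨hwβ, fun w' hw' => hin.2 w' (hβα hw')⟩
      · rw [hminEq]
        exact Or.inr hin
    · rintro ⟨hwR, hwβ⟩
      refine ⟨?_, hwβ⟩
      have hwR' : w ∈ stMod O Ψ ∪ minSet (FMod β.neg) (le Ψ) := by
        have : w ∈ stMod O (O.op Ψ β) := hwR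
        rw [hC Ψ β] at this
        exact this
      show w ∈ stMod O (O.op (O.op Ψ α) β)
      rw [hC (O.op Ψ α) β]
      rcases hwR' with hin | hin
      · left
        rw [hC Ψ α]
        exact Or.inl hin
      · right
        rw [← hminEq]
        exact hin
end

section
/- Let ÷ be an AGM contraction operator with contraction-compatible faithful assignment Ψ ↦ ≤_Ψ. Then ÷ satisfies the independence postulate (IC_ind): if ¬α ⊨ γ and Ψ ÷ β ⊭ (¬α → β), then Ψ ÷ α ⊨ γ implies Ψ ÷ α ÷ β ⊨ γ, if and only if the assignment satisfies (IC^rel_ind): whenever ω₁ ⊨ ¬α and ω₂ ⊨ α with ω₂ ∉ [[Ψ]], then ω₁ ≤_Ψ ω₂ implies ω₁ <_{Ψ÷α} ω₂. -/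
namespace Stmt18

variable {V E : Type}

lemma bel_iff (O : BCO V E) (Ψ : E) (γ : Form V) :
    γ ∈ O.Bel Ψ ↔ ∀ w ∈ stMod O Ψ, γ.eval w = true := by
  constructor
  · intro h w hw; exact hw γ h
  · intro h
    rw [← O.closed Ψ]
    exact h

lemma mem_fmod_neg {α : Form V} {w : World V} :
    w ∈ FMod α.neg ↔ α.eval w = false := by
  simp [FMod, Form.neg, Form.eval]

def lit (v : V) (b : Bool) : Form V := if b then .var v else (Form.var v).neg

lemma eval_lit (w : World V) (v : V) (b : Bool) : (lit v b).eval w = (w v == b) := by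
  cases b <;> simp [lit, Form.eval, Form.neg]

def conjList : List (Form V) → Form V
  | [] => Form.top
  | a :: l => a.conj (conjList l)

lemma eval_conjList (w : World V) (l : List (Form V)) :
    (conjList l).eval w = l.all (fun a => a.eval w) := by
  induction l with
  | nil => simp [conjList, Form.top, Form.neg, Form.eval]
  | cons a l ih => simp [conjList, Form.conj, Form.neg, Form.eval, ih]

noncomputable def formOfWorld [Fintype V] (ω : World V) : Form V :=
  conjList ((Finset.univ.toList).map (fun v => lit v (ω v)))

lemma eval_formOfWorld [Fintype V] (ω w : World V) :
    (formOfWorld ω).eval w = true ↔ w = ω := by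
  rw [formOfWorld, eval_conjList]
  simp only [List.all_eq_true, List.mem_map, Finset.mem_toList, Finset.mem_univ, true_and,
    forall_exists_index, forall_apply_eq_imp_iff, eval_lit, beq_iff_eq]
  constructor
  · intro h; funext v; exact h v
  · intro h v; subst h; rfl

lemma eval_formOfWorld_self [Fintype V] (ω : World V) :
    (formOfWorld ω).eval ω = true := (eval_formOfWorld ω ω).2 rfl

def disj (a b : Form V) : Form V := Form.imp a.neg b

lemma eval_disj (w : World V) (a b : Form V) :
    (disj a b).eval w = (a.eval w || b.eval w) := by
  simp [disj, Form.neg, Form.eval]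

end Stmt18

/-- (IC_ind) holds iff the assignment satisfies (ICʳᵉˡ_ind). -/
theorem stmt_18 {V E : Type} [Fintype V] (O : BCO V E)
    (le : E → World V → World V → Prop)
    (hA : AGMContr O) (hF : Faithful O le) (hC : ContrCompat O le) :
    (∀ (Ψ : E) (α β γ : Form V), FMod α.neg ⊆ FMod γ →
        Form.imp α.neg β ∉ O.Bel (O.op Ψ β) →
          γ ∈ O.Bel (O.op Ψ α) → γ ∈ O.Bel (O.op (O.op Ψ α) β)) ↔
    (∀ (Ψ : E) (α : Form V) (ω₁ ω₂ : World V),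
        ω₁ ∈ FMod α.neg → ω₂ ∈ FMod α → ω₂ ∉ stMod O Ψ →
          le Ψ ω₁ ω₂ → (le (O.op Ψ α) ω₁ ω₂ ∧ ¬ le (O.op Ψ α) ω₂ ω₁)) := by
  classical
  obtain ⟨htot, hfeq, hflt⟩ := hF
  have hrefl : ∀ Ψ' (x : World V), le Ψ' x x := fun Ψ' x => ((htot Ψ').1 x x).elim id id
  have hsub : ∀ Ψ' (α : Form V), stMod O Ψ' ⊆ stMod O (O.op Ψ' α) := by
    intro Ψ' α w hw; rw [hC]; exact Or.inl hw
  constructor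
  · -- IC_ind → relational
    intro hInd Ψ α ω₁ ω₂ h1 h2 h2Ψ hle
    set β : Form V := (Stmt18.disj (Stmt18.formOfWorld ω₁) (Stmt18.formOfWorld ω₂)).neg with hβ
    have hkey : ∀ w : World V, (β.neg).eval w =
        ((Stmt18.formOfWorld ω₁).eval w || (Stmt18.formOfWorld ω₂).eval w) := by
      intro w
      rw [hβ]
      simp [Form.neg, Form.eval, Stmt18.disj]
    have hβneg : ∀ w : World V, w ∈ FMod β.neg ↔ (w = ω₁ ∨ w = ω₂) := by
      intro w
      rw [show (w ∈ FMod β.neg) ↔ (β.neg).eval w = true from Iff.rfl, hkey]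
      simp [Stmt18.eval_formOfWorld]
    set γ : Form V := (Stmt18.formOfWorld ω₂).neg with hγ
    have hγev : ∀ w : World V, γ.eval w = true ↔ w ≠ ω₂ := by
      intro w
      have hk2 : γ.eval w = !((Stmt18.formOfWorld ω₂).eval w) := by
        rw [hγ]; simp [Form.neg, Form.eval]
      rw [hk2, show (w ≠ ω₂) ↔ ¬((Stmt18.formOfWorld ω₂).eval w = true) from
        not_congr (Stmt18.eval_formOfWorld ω₂ w).symm]
      simp
    have h2α : α.eval ω₂ = true := h2
    have hγsub : FMod α.neg ⊆ FMod γ := by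
      intro w hw
      have hf : α.eval w = false := Stmt18.mem_fmod_neg.1 hw
      have hne : w ≠ ω₂ := by rintro rfl; rw [h2α] at hf; simp at hf
      exact (hγev w).2 hne
    have hω₁βneg : ω₁ ∈ FMod β.neg := (hβneg ω₁).2 (Or.inl rfl)
    have hω₂βneg : ω₂ ∈ FMod β.neg := (hβneg ω₂).2 (Or.inr rfl)
    have hω₁min : ω₁ ∈ minSet (FMod β.neg) (le Ψ) := by
      refine ⟨hω₁βneg, fun w' hw' => ?_⟩
      rcases (hβneg w').1 hw' with rfl | rfl
      · exact hrefl Ψ w'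
      · exact hle
    have hω₁st : ω₁ ∈ stMod O (O.op Ψ β) := by rw [hC]; exact Or.inr hω₁min
    have hβev1 : β.eval ω₁ = false := by
      have h' : (β.neg).eval ω₁ = true := hω₁βneg
      have h'' : (β.neg).eval ω₁ = !(β.eval ω₁) := by simp [Form.neg, Form.eval]
      rw [h''] at h'
      simpa using h'
    have hnb : Form.imp α.neg β ∉ O.Bel (O.op Ψ β) := by
      intro hmem
      have hev := (Stmt18.bel_iff O _ _).1 hmem ω₁ hω₁st
      have h1' : (α.neg).eval ω₁ = true := h1
      rw [show (Form.imp α.neg β).eval ω₁ = (!((α.neg).eval ω₁) || β.eval ω₁) from rfl,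
        h1', hβev1] at hev
      simp at hev
    have hγα : γ ∈ O.Bel (O.op Ψ α) := by
      rw [Stmt18.bel_iff]
      intro w hw
      rw [hC] at hw
      refine (hγev w).2 ?_
      rintro rfl
      rcases hw with h | h
      · exact h2Ψ h
      · have hf := Stmt18.mem_fmod_neg.1 h.1
        rw [h2α] at hf; simp at hf
    have hres := (Stmt18.bel_iff O _ _).1 (hInd Ψ α β γ hγsub hnb hγα)
    have hnlt : ¬ le (O.op Ψ α) ω₂ ω₁ := by
      intro hcon
      have hω₂min : ω₂ ∈ minSet (FMod β.neg) (le (O.op Ψ α)) := by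
        refine ⟨hω₂βneg, fun w' hw' => ?_⟩
        rcases (hβneg w').1 hw' with rfl | rfl
        · exact hcon
        · exact hrefl _ w'
      have hst : ω₂ ∈ stMod O (O.op (O.op Ψ α) β) := by rw [hC]; exact Or.inr hω₂min
      exact ((hγev ω₂).1 (hres ω₂ hst)) rfl
    refine ⟨?_, hnlt⟩
    rcases (htot (O.op Ψ α)).1 ω₁ ω₂ with h | h
    · exact h
    · exact absurd h hnlt
  · -- relational → IC_ind
    intro hRel Ψ α β γ hγsub hβnb hγα
    rw [Stmt18.bel_iff] at hγα ⊢
    have hwit : ∃ w ∈ stMod O (O.op Ψ β), (Form.imp α.neg β).eval w = false := by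
      by_contra hcon
      push_neg at hcon
      exact hβnb ((Stmt18.bel_iff O _ _).2 fun w hw =>
        Bool.ne_false_iff.1 (hcon w hw))
    obtain ⟨w, hwst, hwev⟩ := hwit
    rw [show (Form.imp α.neg β).eval w = (!((α.neg).eval w) || β.eval w) from rfl] at hwev
    have hwα : (α.neg).eval w = true ∧ β.eval w = false := by
      rcases Bool.eq_false_or_eq_true ((α.neg).eval w) with hx | hx <;>
        rw [hx] at hwev ⊢ <;> simp_all
    have hwβneg : w ∈ FMod β.neg := Stmt18.mem_fmod_neg.2 hwα.2
    have hwαneg : w ∈ FMod α.neg := hwα.1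
    intro u hu
    rw [hC] at hu
    rcases hu with h | h
    · exact hγα u h
    · by_contra hu'
      have huα : u ∈ FMod α := by
        have hx1 : u ∉ FMod α.neg := fun hx => hu' (hγsub hx)
        have hx2 : ¬ ((α.eval u) = false) := fun hx => hx1 (Stmt18.mem_fmod_neg.2 hx)
        exact Bool.ne_false_iff.1 hx2
      have huΨ : u ∉ stMod O Ψ := fun hx => hu' (hγα u (hsub Ψ α hx))
      have hwleu : le Ψ w u := by
        rw [hC] at hwst
        rcases hwst with h' | h'
        · exact (hflt Ψ w u h' huΨ).1
        · exact h'.2 u h.1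
      exact (hRel Ψ α w u hwαneg huα huΨ hwleu).2 (h.2 w hwβneg)
end

section
/- Every trivial AGM contraction operator violates the independence postulate (IC_ind). A trivial contraction sets [[Ψ÷α]] = [[Ψ]] if [[Ψ]] ∩ [[¬α]] ≠ ∅ and [[Ψ÷α]] = [[Ψ]] ∪ [[¬α]] otherwise; (IC_ind) states: if ¬α ⊨ γ and Ψ ÷ β ⊭ (¬α → β), then Ψ ÷ α ⊨ γ implies Ψ ÷ α ÷ β ⊨ γ. Assume |Ω| ≥ 3 and the set of epistemic states is unbiased. -/
namespace Stmt19Aux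

open Form

lemma eval_neg {V : Type} (w : World V) (a : Form V) :
    (Form.neg a).eval w = !a.eval w := by
  simp [Form.neg, Form.eval]

def disj {V : Type} (a b : Form V) : Form V := Form.imp (Form.neg a) b

lemma eval_disj {V : Type} (w : World V) (a b : Form V) :
    (disj a b).eval w = (a.eval w || b.eval w) := by
  simp [disj, Form.neg, Form.eval]

lemma eval_conj {V : Type} (w : World V) (a b : Form V) :
    (Form.conj a b).eval w = (a.eval w && b.eval w) := by
  simp [Form.conj, Form.neg, Form.eval]

lemma eval_foldr_conj {V : Type} (u : World V) (l : List (Form V)) :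
    (l.foldr Form.conj Form.top).eval u = l.all (fun a => a.eval u) := by
  induction l with
  | nil => simp [Form.top, Form.neg, Form.eval]
  | cons a l ih => simp [eval_conj, ih, List.all_cons]

/-- A formula whose unique model is `w`. -/
noncomputable def charForm {V : Type} [Fintype V] (w : World V) : Form V :=
  ((Finset.univ : Finset V).toList.map
    (fun v => if w v then Form.var v else (Form.var v).neg)).foldr Form.conj Form.top

lemma eval_charForm {V : Type} [Fintype V] (w u : World V) :
    (charForm w).eval u = true ↔ u = w := by
  rw [charForm, eval_foldr_conj, List.all_eq_true]
  have key : ∀ v : V,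
      ((if w v then Form.var v else (Form.var v).neg).eval u = true) ↔ u v = w v := by
    intro v
    cases hw : w v <;> cases hu : u v <;> simp [hw, hu, Form.eval, eval_neg]
  constructor
  · intro h
    funext v
    exact (key v).mp (h _ (List.mem_map.2 ⟨v, by simp, rfl⟩))
  · rintro rfl a ha
    obtain ⟨v, -, rfl⟩ := List.mem_map.1 ha
    exact (key v).mpr rfl

lemma SMod_Cn {V : Type} (X : Set (Form V)) : SMod (Cn X) = SMod X := by
  ext w
  constructor
  · intro h a ha
    exact h a (fun u hu => hu a ha)
  · intro h a ha
    exact ha w h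

lemma mem_Bel_iff {V E : Type} (O : BCO V E) (Θ : E) (a : Form V) :
    a ∈ O.Bel Θ ↔ ∀ w ∈ SMod (O.Bel Θ), a.eval w = true := by
  conv_lhs => rw [← O.closed Θ]
  exact Iff.rfl

end Stmt19Aux

/-- every trivial AGM contraction operator violates (IC_ind),
assuming at least three worlds and unbiasedness. -/
theorem stmt_19 {V E : Type} [Fintype V] [DecidableEq V]
    (h3 : 3 ≤ Fintype.card (World V)) (O : BCO V E)
    (hA : AGMContr O) (hU : Unbiased O)
    (hTriv : ∀ (Ψ : E) (α : Form V),
      ((SMod (O.Bel Ψ) ∩ FMod α.neg).Nonempty →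
          SMod (O.Bel (O.op Ψ α)) = SMod (O.Bel Ψ)) ∧
      (SMod (O.Bel Ψ) ∩ FMod α.neg = ∅ →
          SMod (O.Bel (O.op Ψ α)) = SMod (O.Bel Ψ) ∪ FMod α.neg)) :
    ¬ (∀ (Ψ : E) (α β γ : Form V), FMod α.neg ⊆ FMod γ →
        Form.imp α.neg β ∉ O.Bel (O.op Ψ β) →
          γ ∈ O.Bel (O.op Ψ α) → γ ∈ O.Bel (O.op (O.op Ψ α) β)) := by
  classical
  open Stmt19Aux in
  intro hInd
  -- three distinct worlds
  obtain ⟨f⟩ : Nonempty (Fin 3 ↪ World V) :=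
    Function.Embedding.nonempty_of_card_le (by simpa using h3)
  set w0 := f 0 with hw0
  set w1 := f 1 with hw1
  set w2 := f 2 with hw2
  have h01 : w0 ≠ w1 := fun h => by simpa using f.injective h
  have h02 : w0 ≠ w2 := fun h => by simpa using f.injective h
  have h12 : w1 ≠ w2 := fun h => by simpa using f.injective h
  -- formulas
  set γ : Form V := disj (charForm w0) (charForm w1) with hγ
  set α : Form V := Form.neg γ with hα
  set β : Form V := Form.neg (disj (charForm w1) (charForm w2)) with hβ
  have evalγ : ∀ u : World V, γ.eval u = true ↔ (u = w0 ∨ u = w1) := by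
    intro u
    simp [hγ, eval_disj, eval_charForm]
  have evalαneg : ∀ u : World V, α.neg.eval u = true ↔ (u = w0 ∨ u = w1) := by
    intro u
    rw [eval_neg, hα, eval_neg]
    simp [evalγ u]
  have evalβneg : ∀ u : World V, β.neg.eval u = true ↔ (u = w1 ∨ u = w2) := by
    intro u
    rw [eval_neg, hβ, eval_neg]
    simp [eval_disj, eval_charForm]
  -- the epistemic state with models {w0}
  obtain ⟨Ψ, hΨ⟩ := hU {charForm w0} ⟨w0, by
    intro a ha
    have ha' : a = charForm w0 := ha
    subst ha'
    exact (eval_charForm w0 w0).mpr rfl⟩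
  have hSΨ : SMod (O.Bel Ψ) = {w0} := by
    rw [hΨ, SMod_Cn]
    ext u
    simp only [SMod, Set.mem_setOf_eq, Set.mem_singleton_iff]
    constructor
    · intro h
      exact (eval_charForm w0 u).mp (h _ rfl)
    · rintro rfl a ha
      have ha' : a = charForm w0 := ha
      subst ha'
      exact (eval_charForm w0 w0).mpr rfl
  -- [[Ψ ÷ α]] = {w0}
  have hSα : SMod (O.Bel (O.op Ψ α)) = {w0} := by
    rw [(hTriv Ψ α).1 ⟨w0, by
      rw [hSΨ]
      exact ⟨rfl, (evalαneg w0).mpr (Or.inl rfl)⟩⟩, hSΨ]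
  -- [[Ψ ÷ α ÷ β]] = {w0, w1, w2}
  have hdisj : SMod (O.Bel (O.op Ψ α)) ∩ FMod β.neg = ∅ := by
    rw [hSα]
    ext u
    simp only [Set.mem_inter_iff, Set.mem_singleton_iff, FMod, Set.mem_setOf_eq,
      Set.mem_empty_iff_false, iff_false, not_and]
    rintro rfl hu
    rcases (evalβneg w0).mp hu with h | h
    · exact h01 h
    · exact h02 h
  have hSαβ : SMod (O.Bel (O.op (O.op Ψ α) β)) = {w0} ∪ FMod β.neg := by
    rw [(hTriv (O.op Ψ α) β).2 hdisj, hSα]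
  -- [[Ψ ÷ β]] = {w0, w1, w2}
  have hdisj' : SMod (O.Bel Ψ) ∩ FMod β.neg = ∅ := by
    rw [hSΨ]
    ext u
    simp only [Set.mem_inter_iff, Set.mem_singleton_iff, FMod, Set.mem_setOf_eq,
      Set.mem_empty_iff_false, iff_false, not_and]
    rintro rfl hu
    rcases (evalβneg w0).mp hu with h | h
    · exact h01 h
    · exact h02 h
  have hSβ : SMod (O.Bel (O.op Ψ β)) = {w0} ∪ FMod β.neg := by
    rw [(hTriv Ψ β).2 hdisj', hSΨ]
  -- hypotheses of the independence postulate
  have hsub : FMod α.neg ⊆ FMod γ := by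
    intro u hu
    exact (evalγ u).mpr ((evalαneg u).mp hu)
  have hnot : Form.imp α.neg β ∉ O.Bel (O.op Ψ β) := by
    rw [mem_Bel_iff]
    push_neg
    refine ⟨w1, ?_, ?_⟩
    · rw [hSβ]
      exact Or.inr ((evalβneg w1).mpr (Or.inl rfl))
    · rw [Form.eval]
      have h1 : α.neg.eval w1 = true := (evalαneg w1).mpr (Or.inr rfl)
      have h2 : β.eval w1 = false := by
        rw [hβ, eval_neg, Bool.not_eq_false']
        simp [eval_disj, eval_charForm]
      rw [h1, h2]
      simp
  have hγmem : γ ∈ O.Bel (O.op Ψ α) := by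
    rw [mem_Bel_iff]
    intro u hu
    rw [hSα, Set.mem_singleton_iff] at hu
    exact (evalγ u).mpr (Or.inl hu)
  -- conclusion of the postulate fails at w2
  have hγmem2 := hInd Ψ α β γ hsub hnot hγmem
  rw [mem_Bel_iff] at hγmem2
  have hw2mem : w2 ∈ SMod (O.Bel (O.op (O.op Ψ α) β)) := by
    rw [hSαβ]
    exact Or.inr ((evalβneg w2).mpr (Or.inr rfl))
  have := hγmem2 w2 hw2mem
  rw [evalγ w2] at this
  rcases this with h | h
  · exact h02 h.symm
  · exact h12 h.symm
end
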